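/- Let G be a finite group and let A, B be non-permutable subgroups of G (i.e. AB ≠ BA as subsets of G). Then there exist non-permutable subgroups Â, B̂ of G with A ≤ Â and B ≤ B̂ such that core_G(Â) = core_G(B̂). -/

import Mathlib

open Pointwise

private lemma coe_mul_of_le {G : Type*} [Group G] {N H : Subgroup G} (h : N ≤ H) :
    (N : Set G) * (H : Set G) = (H : Set G) := by
  apply subset_antisymm
  · rintro x ⟨a, ha, b, hb, rfl⟩
    exact H.mul_mem (h ha) hb
  · intro x hx
    exact ⟨1, N.one_mem, x, hx, one_mul x⟩

private lemma card_coe_mul_comm {G : Type*} [Group G] (C D : Subgroup G) :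
    Nat.card ((D : Set G) * (C : Set G) : Set G) =
      Nat.card ((C : Set G) * (D : Set G) : Set G) := by
  have : ((C : Set G) * (D : Set G))⁻¹ = (D : Set G) * (C : Set G) := by
    rw [mul_inv_rev, inv_coe_set, inv_coe_set]
  rw [← this, Set.natCard_inv]

private lemma aux_core_le {G : Type*} [Group G] [Finite G] (C D : Subgroup G)
    (hnp : (C : Set G) * (D : Set G) ≠ (D : Set G) * (C : Set G))
    (hmax : ∀ C' : Subgroup G, C ≤ C' →
      (C' : Set G) * (D : Set G) ≠ (D : Set G) * (C' : Set G) →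
      Nat.card C' ≤ Nat.card C) :
    D.normalCore ≤ C.normalCore := by
  set N := D.normalCore with hN
  have hNnorm : N.Normal := D.normalCore_normal
  rw [Subgroup.normal_le_normalCore]
  -- show N ≤ C
  have key : ((C ⊔ N : Subgroup G) : Set G) * (D : Set G)
      ≠ (D : Set G) * ((C ⊔ N : Subgroup G) : Set G) := by
    intro h
    rw [Subgroup.mul_normal C N] at h
    have h1 : (C : Set G) * (D : Set G) = (D : Set G) * (C : Set G) * (N : Set G) := by
      calc (C : Set G) * (D : Set G)
          = (C : Set G) * ((N : Set G) * (D : Set G)) := by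
            rw [coe_mul_of_le D.normalCore_le]
        _ = (C : Set G) * (N : Set G) * (D : Set G) := (mul_assoc _ _ _).symm
        _ = (D : Set G) * ((C : Set G) * (N : Set G)) := h
        _ = (D : Set G) * (C : Set G) * (N : Set G) := (mul_assoc _ _ _).symm
    have hsub : (D : Set G) * (C : Set G) ⊆ (C : Set G) * (D : Set G) := by
      rw [h1]
      exact Set.subset_mul_left _ N.one_mem
    have hcard := card_coe_mul_comm C D
    exact hnp ((Set.Finite.eq_of_subset_of_card_le (Set.toFinite _) hsub hcard.ge)).symm
  have hle : C ≤ C ⊔ N := le_sup_left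
  have := hmax (C ⊔ N) hle key
  have heq : C = C ⊔ N := Subgroup.eq_of_le_of_card_ge hle this
  exact le_sup_right.trans heq.ge

/-- Let `A, B` be non-permutable subgroups of a finite group `G`
(`AB ≠ BA` as subsets). Then there exist non-permutable subgroups `Â, B̂` of `G` with
`A ≤ Â` and `B ≤ B̂` such that `core_G(Â) = core_G(B̂)`. -/
theorem non_permutable_extend_to_equal_cores {G : Type*} [Group G] [Finite G]
    (A B : Subgroup G)
    (hnp : (A : Set G) * (B : Set G) ≠ (B : Set G) * (A : Set G)) :
    ∃ Ahat Bhat : Subgroup G, A ≤ Ahat ∧ B ≤ Bhat ∧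
      (Ahat : Set G) * (Bhat : Set G) ≠ (Bhat : Set G) * (Ahat : Set G) ∧
      Ahat.normalCore = Bhat.normalCore := by
  classical
  set S : Set (Subgroup G × Subgroup G) :=
    {p | A ≤ p.1 ∧ B ≤ p.2 ∧ (p.1 : Set G) * (p.2 : Set G) ≠ (p.2 : Set G) * (p.1 : Set G)}
    with hS
  have hfin : S.Finite := Set.toFinite S
  have hne : S.Nonempty := ⟨(A, B), le_refl A, le_refl B, hnp⟩
  obtain ⟨p, hp, hpmax⟩ := Set.Finite.exists_maximalFor
    (fun p : Subgroup G × Subgroup G => Nat.card p.1 + Nat.card p.2) S hfin hne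
  obtain ⟨hA, hB, hp3⟩ := hp
  refine ⟨p.1, p.2, hA, hB, hp3, ?_⟩
  apply le_antisymm
  · apply aux_core_le p.2 p.1 (fun h => hp3 h.symm)
    intro D' hD' hnp'
    have hmem : (p.1, D') ∈ S := ⟨hA, hB.trans hD', fun h => hnp' h.symm⟩
    have h1 : Nat.card p.2 ≤ Nat.card D' := Subgroup.card_le_of_le hD'
    have hle2 : Nat.card p.1 + Nat.card p.2 ≤ Nat.card D' + Nat.card p.1 := by omega
    have heq : Nat.card p.1 + Nat.card p.2 = Nat.card p.1 + Nat.card D' :=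
      le_antisymm (Nat.add_le_add_left h1 _) (hpmax (j := (p.1, D')) hmem (Nat.add_le_add_left h1 _))
    omega
  · apply aux_core_le p.1 p.2 hp3
    intro C' hC' hnp'
    have hmem : (C', p.2) ∈ S := ⟨hA.trans hC', hB, hnp'⟩
    have h1 : Nat.card p.1 ≤ Nat.card C' := Subgroup.card_le_of_le hC'
    have heq : Nat.card p.1 + Nat.card p.2 = Nat.card C' + Nat.card p.2 :=
      le_antisymm (Nat.add_le_add_right h1 _) (hpmax (j := (C', p.2)) hmem (Nat.add_le_add_right h1 _))
    omega
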